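/- Let (V,E,μ) be a weighted graph and A, B ≥ 1 constants such that every vertex has at most A neighbours and μ(i,j) ≤ B·μ(i) for every edge (i,j) ∈ E. If the discrete 1-Poincaré inequality holds with constant C > 0, then for every τ ≥ 1 the discrete τ-Poincaré inequality holds with constant 2Cτ(AB)^{1−1/τ}, i.e. (Σ_{i∈V}|f(i)|^τ μ(i))^{1/τ} ≤ 2Cτ(AB)^{1−1/τ} (Σ_{(i,j)∈E}|f(i) − f(j)|^τ μ(i,j))^{1/τ} for every finitely supported f : V → ℝ. -/

import Mathlib

open MeasureTheory Metric Set Filter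
open scoped ENNReal NNReal Topology

noncomputable section

/-- `g` is an upper gradient of `f`: along every rectifiable curve parametrized by arc length
(formalized as a `1`-Lipschitz curve defined on an interval `[0, L]`), the variation of `f`
between the endpoints is controlled by the line integral of `g` along the curve. -/
def IsUpperGradient {X : Type*} [MetricSpace X] (f : X → ℝ) (g : X → ℝ≥0∞) : Prop :=
  ∀ L : ℝ, 0 ≤ L → ∀ γ : ℝ → X, LipschitzOnWith 1 γ (Icc 0 L) →
    ENNReal.ofReal |f (γ L) - f (γ 0)| ≤ ∫⁻ u in Icc (0 : ℝ) L, g (γ u)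

/-- Membership in `L^p(X, m)` for a real exponent `p`. -/
def MemLpR {X : Type*} [MeasurableSpace X] (m : Measure X) (p : ℝ) (f : X → ℝ) : Prop :=
  AEMeasurable f m ∧ (∫⁻ x, ENNReal.ofReal |f x| ^ p ∂m) < ∞

/-- The Cheeger `p`-energy of `f`: the infimum of `liminf ∫ gₙ^p dm` over all sequences
`fₙ ∈ L^p` converging to `f` in `L^p` and upper gradients `gₙ` of `fₙ`. -/
def cheegerEnergy {X : Type*} [MetricSpace X] [MeasurableSpace X]
    (m : Measure X) (p : ℝ) (f : X → ℝ) : ℝ≥0∞ :=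
  ⨅ (F : ℕ → X → ℝ) (G : ℕ → X → ℝ≥0∞) (_ : ∀ n, MemLpR m p (F n))
    (_ : ∀ n, IsUpperGradient (F n) (G n))
    (_ : Tendsto (fun n => ∫⁻ x, ENNReal.ofReal |F n x - f x| ^ p ∂m) atTop (𝓝 0)),
    liminf (fun n => ∫⁻ x, G n x ^ p ∂m) atTop

/-- `f ∈ H^{1,p}(X, d, m)`: `f ∈ L^p` and its Cheeger `p`-energy is finite. -/
def MemH1 {X : Type*} [MetricSpace X] [MeasurableSpace X]
    (m : Measure X) (p : ℝ) (f : X → ℝ) : Prop :=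
  MemLpR m p f ∧ cheegerEnergy m p f < ∞

/-- The measure `m` is finite and nonzero on balls of finite nonzero radius. -/
def BallRegular {X : Type*} [MetricSpace X] [MeasurableSpace X] (m : Measure X) : Prop :=
  ∀ (x : X) (r : ℝ), 0 < r → m (ball x r) ≠ 0 ∧ m (ball x r) < ∞

/-- `m` is globally doubling with doubling dimension `Q`, i.e. doubling constant `2 ^ Q`. -/
def DoublingOfDim {X : Type*} [MetricSpace X] [MeasurableSpace X]
    (m : Measure X) (Q : ℝ) : Prop :=
  ∀ (x : X) (r : ℝ), 0 < r → m (ball x (2 * r)) ≤ ENNReal.ofReal (2 ^ Q) * m (ball x r)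

/-- The weak `(p,p)` Poincaré inequality with constants `C_P > 0` and `lam ≥ 1`. -/
def WeakPoincare {X : Type*} [MetricSpace X] [MeasurableSpace X]
    (m : Measure X) (p C_P lam : ℝ) : Prop :=
  ∀ f : X → ℝ, LocallyIntegrable f m →
    ∀ g : X → ℝ≥0∞, Measurable g → IsUpperGradient f g → (∫⁻ x, g x ^ p ∂m) < ∞ →
      ∀ (x : X) (r : ℝ), 0 < r →
        ((∫⁻ y in ball x r, ENNReal.ofReal |f y - (⨍ z in ball x r, f z ∂m)| ^ p ∂m) /
            m (ball x r)) ^ (1 / p) ≤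
          ENNReal.ofReal (C_P * r) *
            ((∫⁻ y in ball x (lam * r), g y ^ p ∂m) / m (ball x (lam * r))) ^ (1 / p)

/-- Reverse doubling at the point `o`: `m(B_R(o))/m(B_r(o)) ≥ C_o (R/r)^η` for `0 < r ≤ R`. -/
def ReverseDoubling {X : Type*} [MetricSpace X] [MeasurableSpace X]
    (m : Measure X) (o : X) (C_o η : ℝ) : Prop :=
  ∀ r R : ℝ, 0 < r → r ≤ R → ENNReal.ofReal (C_o * (R / r) ^ η) * m (ball o r) ≤ m (ball o R)

/-- The weighted measure `μ_{s,t}` with density `m(B_{d(o,x)}(o))^{t/s-1} · d(o,x)^{-t}`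
with respect to `m`. -/
def weightMeasure {X : Type*} [MetricSpace X] [MeasurableSpace X]
    (m : Measure X) (o : X) (s t : ℝ) : Measure X :=
  m.withDensity fun x => m (ball o (dist o x)) ^ (t / s - 1) * ENNReal.ofReal (dist o x) ^ (-t)

/-- A geodesic metric space: any two points are joined by a curve of length equal to their
distance (formalized: a `1`-Lipschitz curve defined on `[0, d(x,y)]` from `x` to `y`). -/
def IsGeodesicSpace (X : Type*) [MetricSpace X] : Prop :=
  ∀ x y : X, ∃ γ : ℝ → X, γ 0 = x ∧ γ (dist x y) = y ∧ LipschitzOnWith 1 γ (Icc 0 (dist x y))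

/-- A good covering of the doubly measured metric space `(X, d, m, μ)`, indexed by `I`,
with parameters `Q₁` and `Q₂`. -/
structure GoodCovering {X : Type*} [MetricSpace X] [MeasurableSpace X]
    (m μ : Measure X) (I : Type*) (Q₁ Q₂ : ℝ) where
  U : I → Set X
  Ustar : I → Set X
  Usharp : I → Set X
  countable : Countable I
  measurable_U : ∀ i, MeasurableSet (U i)
  measurable_Ustar : ∀ i, MeasurableSet (Ustar i)
  measurable_Usharp : ∀ i, MeasurableSet (Usharp i)
  finite_m : ∀ i, m (Usharp i) < ∞
  finite_mu : ∀ i, μ (Usharp i) < ∞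
  U_subset_Ustar : ∀ i, U i ⊆ Ustar i
  Ustar_subset_Usharp : ∀ i, Ustar i ⊆ Usharp i
  cover_m : m (univ \ ⋃ i, U i) = 0
  cover_mu : μ (univ \ ⋃ i, U i) = 0
  overlap_finite : ∀ i, {j : I | (closure (Usharp j) ∩ closure (Usharp i)).Nonempty}.Finite
  overlap_card : ∀ i,
    (Nat.card {j : I | (closure (Usharp j) ∩ closure (Usharp i)).Nonempty} : ℝ) ≤ Q₁
  chain : ∀ i j : I, (closure (U i) ∩ closure (U j)).Nonempty →
    ∃ k : I, U i ∪ U j ⊆ Ustar k ∧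
      m (Ustar k) ≤ ENNReal.ofReal Q₂ * min (m (U i)) (m (U j)) ∧
      μ (Ustar k) ≤ ENNReal.ofReal Q₂ * min (μ (U i)) (μ (U j))


lemma rpow_sub_rpow_le {τ : ℝ} (hτ : 1 ≤ τ) {a b : ℝ} (hb : 0 ≤ b) (hba : b ≤ a) :
    a ^ τ - b ^ τ ≤ τ * a ^ (τ - 1) * (a - b) := by
  rcases eq_or_lt_of_le hba with rfl | hlt
  · norm_num
  · obtain ⟨c, hc, hc'⟩ := exists_hasDerivAt_eq_slope (fun x => x ^ τ)
      (fun x => τ * x ^ (τ - 1)) hlt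
      (fun x _ => (Real.hasDerivAt_rpow_const (Or.inr hτ)).continuousAt.continuousWithinAt)
      (fun x _ => Real.hasDerivAt_rpow_const (Or.inr hτ))
    have hc0 : 0 ≤ c := le_of_lt (lt_of_le_of_lt hb hc.1)
    have h1 : a ^ τ - b ^ τ = τ * c ^ (τ - 1) * (a - b) := by
      rw [eq_div_iff (sub_ne_zero.mpr hlt.ne')] at hc'
      linarith [hc']
    rw [h1]
    have : c ^ (τ - 1) ≤ a ^ (τ - 1) :=
      Real.rpow_le_rpow hc0 (le_of_lt hc.2) (by linarith)
    have hτ0 : (0:ℝ) ≤ τ := by linarith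
    nlinarith [mul_nonneg (mul_nonneg hτ0 (sub_nonneg.2 this)) (sub_nonneg.2 (le_of_lt hlt))]

lemma abs_rpow_sub_abs_rpow_le {τ : ℝ} (hτ : 1 ≤ τ) (a b : ℝ) :
    abs (|a| ^ τ - |b| ^ τ) ≤ τ * (|a| ^ (τ - 1) + |b| ^ (τ - 1)) * |a - b| := by
  have key : ∀ x y : ℝ, |y| ≤ |x| →
      abs (|x| ^ τ - |y| ^ τ) ≤ τ * (|x| ^ (τ - 1) + |y| ^ (τ - 1)) * |x - y| := by
    intro x y hxy
    have h0 : |y| ^ τ ≤ |x| ^ τ := Real.rpow_le_rpow (abs_nonneg y) hxy (by linarith)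
    rw [abs_of_nonneg (by linarith)]
    have h2 := rpow_sub_rpow_le hτ (abs_nonneg y) hxy
    have h3 : |x| - |y| ≤ |x - y| := abs_sub_abs_le_abs_sub x y
    have h4 : (0:ℝ) ≤ |x| ^ (τ - 1) := Real.rpow_nonneg (abs_nonneg x) _
    have h5 : (0:ℝ) ≤ |y| ^ (τ - 1) := Real.rpow_nonneg (abs_nonneg y) _
    have hτ0 : (0:ℝ) ≤ τ := by linarith
    nlinarith [mul_nonneg (mul_nonneg hτ0 h4) (sub_nonneg.2 h3),
      mul_nonneg (mul_nonneg hτ0 h5) (abs_nonneg (x - y))]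
  rcases le_total |b| |a| with h | h
  · exact key a b h
  · have := key b a h
    rw [abs_sub_comm, abs_sub_comm a b]
    linarith [this]
open MeasureTheory Filter
open scoped ENNReal NNReal

lemma tsum_holder {ι : Type*} (a b : ι → ℝ≥0∞) {p q : ℝ} (hpq : p.HolderConjugate q) :
    ∑' e, a e * b e ≤ (∑' e, a e ^ p) ^ (1/p) * (∑' e, b e ^ q) ^ (1/q) := by
  letI : MeasurableSpace ι := ⊤
  haveI : MeasurableSingletonClass ι := ⟨fun _ => trivial⟩
  have h := ENNReal.lintegral_mul_le_Lp_mul_Lq (Measure.count (α := ι)) hpq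
    (measurable_from_top (f := a)).aemeasurable (measurable_from_top (f := b)).aemeasurable
  simpa [lintegral_count] using h

/-- The discrete 1-Poincaré inequality upgrades to a discrete τ-Poincaré
inequality with constant `2Cτ(AB)^{1-1/τ}`. -/
theorem discrete_poincare_upgrade
    (V : Type) [Countable V] (E : V → V → Prop)
    (hEsymm : ∀ i j, E i j → E j i)
    (wV : V → ℝ) (hwV : ∀ i, 0 < wV i)
    (wE : V → V → ℝ) (hwE : ∀ i j, E i j → 0 < wE i j)
    (hwEsymm : ∀ i j, E i j → wE i j = wE j i)
    (A B : ℝ) (hA : 1 ≤ A) (hB : 1 ≤ B)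
    (hdegfin : ∀ i, {j : V | E i j}.Finite)
    (hdeg : ∀ i, (Nat.card {j : V | E i j} : ℝ) ≤ A)
    (hwEB : ∀ i j, E i j → wE i j ≤ B * wV i)
    (C : ℝ) (hC : 0 < C)
    (h1 : ∀ f : V → ℝ, (Function.support f).Finite →
      ∑' i : V, ENNReal.ofReal (|f i| * wV i) ≤
        ENNReal.ofReal C *
          ∑' e : {q : V × V // E q.1 q.2},
            ENNReal.ofReal (|f e.1.1 - f e.1.2| * wE e.1.1 e.1.2))
    (τ : ℝ) (hτ : 1 ≤ τ) :
    ∀ f : V → ℝ, (Function.support f).Finite →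
      (∑' i : V, ENNReal.ofReal (|f i| ^ τ * wV i)) ^ (1 / τ) ≤
        ENNReal.ofReal (2 * C * τ * (A * B) ^ (1 - 1 / τ)) *
          (∑' e : {q : V × V // E q.1 q.2},
            ENNReal.ofReal (|f e.1.1 - f e.1.2| ^ τ * wE e.1.1 e.1.2)) ^ (1 / τ) := by
  intro f hf
  have hτ0 : (0:ℝ) < τ := lt_of_lt_of_le one_pos hτ
  rcases eq_or_lt_of_le hτ with rfl | hτ1
  · -- τ = 1
    have he : (2 * C * 1 * (A * B) ^ (1 - 1 / (1:ℝ))) = 2 * C := by norm_num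
    simp only [Real.rpow_one, ENNReal.rpow_one, he, one_div_one]
    refine le_trans (h1 f hf) (mul_le_mul_left (ENNReal.ofReal_le_ofReal (by rw [show (1:ℝ)-1 = 0 by norm_num, Real.rpow_zero]; linarith)) _)
  · -- 1 < τ
    set ι := {q : V × V // E q.1 q.2}
    set S := ∑' i : V, ENNReal.ofReal (|f i| ^ τ * wV i) with hSdef
    set T := ∑' e : ι, ENNReal.ofReal (|f e.1.1 - f e.1.2| ^ τ * wE e.1.1 e.1.2) with hTdef
    have hτne : τ ≠ 0 := hτ0.ne'
    have hτ1ne : τ - 1 ≠ 0 := sub_ne_zero.mpr hτ1.ne'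
    have hκ0 : (0:ℝ) ≤ (τ - 1) / τ := div_nonneg (by linarith) hτ0.le
    have hκeq : (τ - 1) / τ = 1 - 1 / τ := by field_simp
    -- S is finite
    have hS_ne_top : S ≠ ⊤ := by
      rw [hSdef, tsum_eq_sum (s := hf.toFinset) (fun i hi => by
        have : f i = 0 := by
          by_contra h0
          exact hi (hf.mem_toFinset.mpr h0)
        simp [this, Real.zero_rpow hτne])]
      exact (ENNReal.sum_lt_top.mpr (fun _ _ => ENNReal.ofReal_lt_top)).ne
    -- support of |f|^τ
    have hg_fin : (Function.support fun i => |f i| ^ τ).Finite := by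
      refine hf.subset (fun i hi => ?_)
      simp only [Function.mem_support] at hi ⊢
      intro h0
      exact hi (by simp [h0, Real.zero_rpow hτne])
    -- apply the 1-Poincaré inequality
    have hP := h1 (fun i => |f i| ^ τ) hg_fin
    have habs : ∀ x : ℝ, abs (|x| ^ τ) = |x| ^ τ := fun x =>
      abs_of_nonneg (Real.rpow_nonneg (abs_nonneg x) τ)
    simp only [habs] at hP
    -- edge sums
    set Q1 : ι → ℝ≥0∞ := fun e =>
      ENNReal.ofReal (τ * (|f e.1.1| ^ (τ-1) * |f e.1.1 - f e.1.2| * wE e.1.1 e.1.2)) with hQ1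
    set Q2 : ι → ℝ≥0∞ := fun e =>
      ENNReal.ofReal (τ * (|f e.1.2| ^ (τ-1) * |f e.1.1 - f e.1.2| * wE e.1.1 e.1.2)) with hQ2
    have hES : (∑' e : ι, ENNReal.ofReal (abs (|f e.1.1| ^ τ - |f e.1.2| ^ τ) * wE e.1.1 e.1.2))
        ≤ ∑' e : ι, Q1 e + ∑' e : ι, Q2 e := by
      rw [← ENNReal.tsum_add]
      refine ENNReal.tsum_le_tsum (fun e => ?_)
      have hab := abs_rpow_sub_abs_rpow_le hτ (f e.1.1) (f e.1.2)
      have hw := hwE _ _ e.2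
      have h4 : (0:ℝ) ≤ |f e.1.1| ^ (τ - 1) := Real.rpow_nonneg (abs_nonneg _) _
      have h5 : (0:ℝ) ≤ |f e.1.2| ^ (τ - 1) := Real.rpow_nonneg (abs_nonneg _) _
      calc ENNReal.ofReal (abs (|f e.1.1| ^ τ - |f e.1.2| ^ τ) * wE e.1.1 e.1.2)
          ≤ ENNReal.ofReal ((τ * ((|f e.1.1| ^ (τ-1) + |f e.1.2| ^ (τ-1)) * |f e.1.1 - f e.1.2|))
              * wE e.1.1 e.1.2) := by
            refine ENNReal.ofReal_le_ofReal (mul_le_mul_of_nonneg_right ?_ hw.le)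
            calc abs (|f e.1.1| ^ τ - |f e.1.2| ^ τ)
                ≤ τ * (|f e.1.1| ^ (τ-1) + |f e.1.2| ^ (τ-1)) * |f e.1.1 - f e.1.2| := hab
              _ = τ * ((|f e.1.1| ^ (τ-1) + |f e.1.2| ^ (τ-1)) * |f e.1.1 - f e.1.2|) := by ring
        _ = Q1 e + Q2 e := by
            simp only [hQ1, hQ2]
            rw [← ENNReal.ofReal_add (by positivity) (by positivity)]
            congr 1
            ring
    -- swap symmetry: ∑ Q2 = ∑ Q1
    have hswap : ∑' e : ι, Q2 e = ∑' e : ι, Q1 e := by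
      rw [← Equiv.tsum_eq (⟨fun e => ⟨(e.1.2, e.1.1), hEsymm _ _ e.2⟩,
        fun e => ⟨(e.1.2, e.1.1), hEsymm _ _ e.2⟩,
        fun e => rfl, fun e => rfl⟩ : ι ≃ ι) Q1]
      refine tsum_congr (fun e => ?_)
      show Q2 e = ENNReal.ofReal (τ * (|f e.1.2| ^ (τ-1) * |f e.1.2 - f e.1.1| * wE e.1.2 e.1.1))
      simp only [hQ2]
      rw [abs_sub_comm (f e.1.2) (f e.1.1), hwEsymm _ _ e.2]
    -- Hölder on ∑ Q1
    have hpq : (τ / (τ - 1)).HolderConjugate τ := (Real.HolderConjugate.conjExponent hτ1).symm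
    set u : ι → ℝ≥0∞ := fun e => ENNReal.ofReal (|f e.1.1| ^ τ * wE e.1.1 e.1.2) with hu
    have key : ∀ (x d w : ℝ), 0 ≤ x → 0 ≤ d → 0 < w →
        ENNReal.ofReal (x ^ (τ-1) * d * w) =
          (ENNReal.ofReal (x ^ τ * w)) ^ ((τ-1)/τ) * (ENNReal.ofReal (d ^ τ * w)) ^ (1/τ) := by
      intro x d w hx hd hw
      rw [ENNReal.ofReal_rpow_of_nonneg (by positivity) hκ0,
        ENNReal.ofReal_rpow_of_nonneg (by positivity) (by positivity),
        ← ENNReal.ofReal_mul (by positivity)]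
      congr 1
      rw [Real.mul_rpow (Real.rpow_nonneg hx _) hw.le,
        Real.mul_rpow (Real.rpow_nonneg hd _) hw.le,
        ← Real.rpow_mul hx, ← Real.rpow_mul hd]
      have e1 : τ * ((τ-1)/τ) = τ - 1 := by field_simp
      have e2 : τ * (1/τ) = 1 := by field_simp
      have e3 : w ^ ((τ-1)/τ) * w ^ (1/τ) = w := by
        rw [← Real.rpow_add hw]
        have : (τ-1)/τ + 1/τ = 1 := by field_simp; ring
        rw [this, Real.rpow_one]
      rw [e1, e2, Real.rpow_one,
        show x ^ (τ-1) * w ^ ((τ-1)/τ) * (d * w ^ (1/τ))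
          = x ^ (τ-1) * d * (w ^ ((τ-1)/τ) * w ^ (1/τ)) by ring, e3]
    have hholder : ∑' e : ι, Q1 e ≤
        ENNReal.ofReal τ * ((∑' e : ι, u e) ^ ((τ-1)/τ) * T ^ (1/τ)) := by
      have hQ1split : ∀ e : ι, Q1 e = ENNReal.ofReal τ *
          ((u e) ^ ((τ-1)/τ) * (ENNReal.ofReal (|f e.1.1 - f e.1.2| ^ τ * wE e.1.1 e.1.2)) ^ (1/τ)) := by
        intro e
        show ENNReal.ofReal (τ * (|f e.1.1| ^ (τ-1) * |f e.1.1 - f e.1.2| * wE e.1.1 e.1.2)) = _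
        rw [ENNReal.ofReal_mul hτ0.le,
          key (|f e.1.1|) (|f e.1.1 - f e.1.2|) (wE e.1.1 e.1.2) (abs_nonneg _) (abs_nonneg _)
            (hwE _ _ e.2)]
      calc ∑' e : ι, Q1 e
          = ENNReal.ofReal τ * ∑' e : ι, ((u e) ^ ((τ-1)/τ) *
              (ENNReal.ofReal (|f e.1.1 - f e.1.2| ^ τ * wE e.1.1 e.1.2)) ^ (1/τ)) := by
            rw [← ENNReal.tsum_mul_left]
            exact tsum_congr hQ1split
        _ ≤ ENNReal.ofReal τ * ((∑' e : ι, u e) ^ ((τ-1)/τ) * T ^ (1/τ)) := by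
            refine mul_le_mul_right ?_ _
            have hh := tsum_holder (fun e : ι => (u e) ^ ((τ-1)/τ))
              (fun e : ι => (ENNReal.ofReal (|f e.1.1 - f e.1.2| ^ τ * wE e.1.1 e.1.2)) ^ (1/τ))
              hpq
            have ea : ∀ e : ι, ((u e) ^ ((τ-1)/τ)) ^ (τ/(τ-1)) = u e := by
              intro e
              rw [← ENNReal.rpow_mul]
              have : (τ-1)/τ * (τ/(τ-1)) = 1 := by field_simp
              rw [this, ENNReal.rpow_one]
            have eb : ∀ e : ι,
                ((ENNReal.ofReal (|f e.1.1 - f e.1.2| ^ τ * wE e.1.1 e.1.2)) ^ (1/τ)) ^ τ =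
                ENNReal.ofReal (|f e.1.1 - f e.1.2| ^ τ * wE e.1.1 e.1.2) := by
              intro e
              rw [← ENNReal.rpow_mul, one_div, inv_mul_cancel₀ hτne, ENNReal.rpow_one]
            simp only [ea, eb] at hh
            have ed : 1 / (τ/(τ-1)) = (τ-1)/τ := one_div_div τ (τ-1)
            rw [ed] at hh
            exact hh
    -- degree bound : ∑ u ≤ ofReal (A*B) * S
    have hdeg' : ∀ g : V → ℝ≥0∞, ∑' e : ι, g e.1.1 ≤ ENNReal.ofReal A * ∑' i : V, g i := by
      intro g
      have h0 : ∑' e : ι, g e.1.1 = ∑' s : Σ i : V, {j : V // E i j}, g s.1 :=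
        (Equiv.tsum_eq (⟨fun s => ⟨(s.1, s.2.1), s.2.2⟩, fun e => ⟨e.1.1, ⟨e.1.2, e.2⟩⟩,
          fun s => rfl, fun e => rfl⟩ : (Σ i : V, {j : V // E i j}) ≃ ι)
          (fun e : ι => g e.1.1)).symm
      rw [h0, ENNReal.tsum_sigma']
      calc ∑' (i : V), ∑' (_ : {j : V // E i j}), g i
          ≤ ∑' (i : V), ENNReal.ofReal A * g i := by
            refine ENNReal.tsum_le_tsum (fun i => ?_)
            haveI : Finite {j : V // E i j} := (hdegfin i).to_subtype
            haveI : Fintype {j : V // E i j} := Fintype.ofFinite _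
            rw [tsum_fintype]
            rw [Finset.sum_const, nsmul_eq_mul]
            refine mul_le_mul_left ?_ _
            have hcard : (Nat.card {j : V // E i j} : ℝ) ≤ A := hdeg i
            rw [Nat.card_eq_fintype_card] at hcard
            have : (Finset.univ.card (α := {j : V // E i j}) : ℝ≥0∞) =
                ENNReal.ofReal (Fintype.card {j : V // E i j} : ℝ) := by
              rw [ENNReal.ofReal_natCast, Finset.card_univ]
            rw [this]
            exact ENNReal.ofReal_le_ofReal hcard
        _ = ENNReal.ofReal A * ∑' i : V, g i := ENNReal.tsum_mul_left
    have hU : ∑' e : ι, u e ≤ ENNReal.ofReal (A * B) * S := by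
      calc ∑' e : ι, u e
          ≤ ∑' e : ι, (ENNReal.ofReal B * ENNReal.ofReal (|f e.1.1| ^ τ * wV e.1.1)) := by
            refine ENNReal.tsum_le_tsum (fun e => ?_)
            rw [hu, ← ENNReal.ofReal_mul (by linarith)]
            refine ENNReal.ofReal_le_ofReal ?_
            have := hwEB _ _ e.2
            have hx : (0:ℝ) ≤ |f e.1.1| ^ τ := Real.rpow_nonneg (abs_nonneg _) _
            nlinarith
        _ ≤ ENNReal.ofReal B * (ENNReal.ofReal A * S) := by
            rw [ENNReal.tsum_mul_left]
            exact mul_le_mul_right (hdeg' fun i => ENNReal.ofReal (|f i| ^ τ * wV i)) _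
        _ = ENNReal.ofReal (A * B) * S := by
            rw [ENNReal.ofReal_mul (by linarith), ← mul_assoc, mul_comm (ENNReal.ofReal A)]
    -- main chain
    have hmain : S ≤ (ENNReal.ofReal (2 * C * τ * (A * B) ^ (1 - 1/τ)) * T ^ (1/τ)) *
        S ^ ((τ-1)/τ) := by
      have hKeq : ENNReal.ofReal (2 * C * τ * (A * B) ^ (1 - 1/τ)) =
          2 * ENNReal.ofReal C * ENNReal.ofReal τ * (ENNReal.ofReal (A * B)) ^ ((τ-1)/τ) := by
        have hABpos : (0:ℝ) < A * B := by nlinarith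
        rw [hκeq,
          show (2 * C * τ * (A * B) ^ (1 - 1/τ)) = 2 * (C * (τ * (A * B) ^ (1 - 1/τ))) by ring,
          ENNReal.ofReal_mul (by norm_num : (0:ℝ) ≤ 2), ENNReal.ofReal_mul hC.le,
          ENNReal.ofReal_mul hτ0.le, ENNReal.ofReal_rpow_of_pos hABpos, ENNReal.ofReal_ofNat]
        ring
      calc S ≤ ENNReal.ofReal C *
            (∑' e : ι, ENNReal.ofReal (abs (|f e.1.1| ^ τ - |f e.1.2| ^ τ) * wE e.1.1 e.1.2)) := hP
        _ ≤ ENNReal.ofReal C * (2 * ∑' e : ι, Q1 e) := by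
            refine mul_le_mul_right ?_ _
            refine le_trans hES ?_
            rw [hswap, two_mul]
        _ ≤ ENNReal.ofReal C * (2 * (ENNReal.ofReal τ *
              ((ENNReal.ofReal (A * B) * S) ^ ((τ-1)/τ) * T ^ (1/τ)))) := by
            refine mul_le_mul_right (mul_le_mul_right ?_ _) _
            refine le_trans hholder ?_
            exact mul_le_mul_right (mul_le_mul_left (ENNReal.rpow_le_rpow hU hκ0) _) _
        _ = (ENNReal.ofReal (2 * C * τ * (A * B) ^ (1 - 1/τ)) * T ^ (1/τ)) * S ^ ((τ-1)/τ) := by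
            rw [hKeq, ENNReal.mul_rpow_of_nonneg _ _ hκ0]
            ring
    -- conclude
    by_cases hS0 : S = 0
    · rw [hS0, ENNReal.zero_rpow_of_pos (by positivity)]
      exact zero_le'
    · have hSκ0 : S ^ ((τ-1)/τ) ≠ 0 := by
        rw [ne_eq, ENNReal.rpow_eq_zero_iff]
        push_neg
        exact ⟨fun h => absurd h hS0, fun h => absurd h hS_ne_top⟩
      have hSκtop : S ^ ((τ-1)/τ) ≠ ⊤ := ENNReal.rpow_ne_top_of_nonneg hκ0 hS_ne_top
      have hsplit : S = S ^ (1/τ) * S ^ ((τ-1)/τ) := by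
        rw [← ENNReal.rpow_add _ _ hS0 hS_ne_top]
        have : 1/τ + (τ-1)/τ = 1 := by field_simp; ring
        rw [this, ENNReal.rpow_one]
      refine (ENNReal.mul_le_mul_iff_left hSκ0 hSκtop).mp ?_
      rw [← hsplit]
      exact hmain
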